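/- arXiv:1806.03022 — 2 statements merged into one kernel-verified Lean document; each statement's English description precedes it below -/
import Mathlib

section
/- Let n be a positive integer and let s be a complex number such that s + j ≠ 0 for j = 1, …, n. Then for every complex number x: ∑_{k=1}^{n} C(s+n, k) · (∑_{j=0}^{k-1} 1/(s+n-j)) · x^k = ∑_{k=0}^{n-1} (C(s+k, k)/(k+1)) · (1 + s · ∑_{j=1}^{k} 1/(s+j)) · x^{k+1} · (1+x)^{n-k-1}. -/
/-- Generalized binomial coefficient `C(s,k) = s(s-1)⋯(s-k+1)/k!` for complex `s`. -/
noncomputable def genChoose (s : ℂ) (k : ℕ) : ℂ :=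
  (∏ i ∈ Finset.range k, (s - i)) / (Nat.factorial k)

/-- The `n`-th harmonic number as a complex number. -/
noncomputable def Hc (n : ℕ) : ℂ := ∑ i ∈ Finset.range n, 1 / (i + 1)

/-- The `n`-th generalized harmonic number of order 2 as a complex number. -/
noncomputable def H2c (n : ℕ) : ℂ := ∑ i ∈ Finset.range n, 1 / ((i : ℂ) + 1) ^ 2

lemma genChoose_succ (s : ℂ) (k : ℕ) :
    genChoose s (k+1) = genChoose s k * (s - k) / (k+1) := by
  unfold genChoose
  rw [Finset.prod_range_succ, Nat.factorial_succ]
  push_cast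
  rw [div_mul_eq_mul_div, div_div]
  congr 1
  ring

lemma genChoose_pascal (t : ℂ) (k : ℕ) :
    genChoose (t+1) (k+1) = genChoose t (k+1) + genChoose t k := by
  have h : ∏ i ∈ Finset.range (k+1), (t + 1 - (i:ℂ)) = (t+1) * ∏ i ∈ Finset.range k, (t - (i:ℂ)) := by
    rw [Finset.prod_range_succ']
    simp only [Nat.cast_zero, sub_zero]
    rw [mul_comm]
    congr 1
    apply Finset.prod_congr rfl
    intro i _
    push_cast
    ring
  unfold genChoose
  rw [h, Finset.prod_range_succ, Nat.factorial_succ]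
  have h1 : ((Nat.factorial k : ℂ)) ≠ 0 := by exact_mod_cast Nat.factorial_ne_zero k
  have h2 : ((k:ℂ)+1) ≠ 0 := by exact_mod_cast Nat.succ_ne_zero k
  push_cast
  field_simp
  ring

lemma key (t : ℂ) (k : ℕ) (h1 : t + 1 ≠ 0) (h2 : t - k ≠ 0) (S : ℂ) :
    genChoose (t+1) (k+1) * (1/(t+1) + S)
      = genChoose t (k+1) * (S + 1/(t-k)) + genChoose t k * S := by
  rw [genChoose_pascal, genChoose_succ]
  have h3 : ((k:ℂ)+1) ≠ 0 := by exact_mod_cast Nat.succ_ne_zero k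
  field_simp
  ring

lemma key_top (s : ℂ) (n : ℕ) (h : s + n + 1 ≠ 0) (T : ℂ) :
    genChoose (s+n+1) (n+1) * (T + 1/(s+n+1))
      = genChoose (s+n) n * T + genChoose (s+n) n / (n+1) * (1 + s*T) := by
  rw [genChoose_pascal (s + n) n, genChoose_succ]
  have hc : s + (n:ℂ) - n = s := by ring
  rw [hc]
  have h3 : ((n:ℂ)+1) ≠ 0 := by exact_mod_cast Nat.succ_ne_zero n
  field_simp
  ring

lemma sum_reindex (s : ℂ) (n : ℕ) :
    ∑ j ∈ Finset.range n, 1/(s + n - j) = ∑ j ∈ Finset.Icc 1 n, 1/(s + j) := by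
  apply Finset.sum_nbij' (fun j => n - j) (fun j => n - j)
  · intro a ha; simp at ha ⊢; omega
  · intro a ha; simp [Finset.mem_Icc] at ha ⊢; omega
  · intro a ha; simp at ha ⊢; omega
  · intro a ha; simp [Finset.mem_Icc] at ha ⊢; omega
  · intro a ha
    simp at ha
    rw [Nat.cast_sub (by omega)]
    congr 1
    ring

lemma LHS_step (n : ℕ) (s x : ℂ)
    (hs : ∀ j ∈ Finset.Icc 1 (n+1), s + (j:ℂ) ≠ 0) :
    ∑ k ∈ Finset.range (n+1+1),
        genChoose (s + n + 1) k * (∑ j ∈ Finset.range k, 1/(s + n + 1 - j)) * x ^ k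
      = (1 + x) * ∑ k ∈ Finset.range (n+1),
          genChoose (s + n) k * (∑ j ∈ Finset.range k, 1/(s + n - j)) * x ^ k
        + genChoose (s + n) n / (n+1) * (1 + s * ∑ j ∈ Finset.Icc 1 n, 1/(s + j)) * x^(n+1) := by
  have hsn1 : s + (n:ℂ) + 1 ≠ 0 := by
    have h := hs (n+1) (by simp)
    push_cast at h
    rwa [← add_assoc] at h
  -- coefficient identity for 1 ≤ k+1 ≤ n
  have h1 : ∀ k ∈ Finset.range n,
      genChoose (s+n+1) (k+1) * (∑ j ∈ Finset.range (k+1), 1/(s+(n:ℂ)+1-j))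
        = genChoose (s+n) (k+1) * (∑ j ∈ Finset.range (k+1), 1/(s+(n:ℂ)-j))
          + genChoose (s+n) k * (∑ j ∈ Finset.range k, 1/(s+(n:ℂ)-j)) := by
    intro k hk
    simp only [Finset.mem_range] at hk
    have hkn : s + (n:ℂ) - k ≠ 0 := by
      have h := hs (n - k) (by simp [Finset.mem_Icc]; omega)
      rw [Nat.cast_sub (by omega)] at h
      rwa [add_sub_assoc]
    have e1 : ∑ j ∈ Finset.range (k+1), 1/(s+(n:ℂ)+1-(j:ℂ))
        = 1/(s+(n:ℂ)+1) + ∑ j ∈ Finset.range k, 1/(s+(n:ℂ)-(j:ℂ)) := by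
      rw [Finset.sum_range_succ']
      simp only [Nat.cast_zero, sub_zero]
      rw [add_comm]
      congr 1
      apply Finset.sum_congr rfl
      intro j _
      congr 1
      push_cast
      ring
    have e2 : ∑ j ∈ Finset.range (k+1), 1/(s+(n:ℂ)-(j:ℂ))
        = (∑ j ∈ Finset.range k, 1/(s+(n:ℂ)-(j:ℂ))) + 1/(s+(n:ℂ)-k) :=
      Finset.sum_range_succ _ _
    rw [e1, e2]
    exact key (s+n) k hsn1 hkn _
  -- top coefficient identity
  have h2 : genChoose (s+(n:ℂ)+1) (n+1) * (∑ j ∈ Finset.range (n+1), 1/(s+(n:ℂ)+1-j))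
      = genChoose (s+n) n * (∑ j ∈ Finset.range n, 1/(s+(n:ℂ)-j))
        + genChoose (s+n) n / (n+1) * (1 + s * ∑ j ∈ Finset.Icc 1 n, 1/(s + j)) := by
    have eT : ∑ j ∈ Finset.range n, 1/(s+(n:ℂ)-(j:ℂ)) = ∑ j ∈ Finset.Icc 1 n, 1/(s + j) :=
      sum_reindex s n
    have eT2 : ∑ j ∈ Finset.range (n+1), 1/(s+(n:ℂ)+1-(j:ℂ))
        = (∑ j ∈ Finset.Icc 1 n, 1/(s + j)) + 1/(s+(n:ℂ)+1) := by
      have h := sum_reindex s (n+1)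
      have h' : ∑ j ∈ Finset.range (n+1), 1/(s+(n:ℂ)+1-(j:ℂ))
          = ∑ j ∈ Finset.range (n+1), 1/(s + ((n+1:ℕ):ℂ) - (j:ℂ)) := by
        apply Finset.sum_congr rfl
        intro j _
        congr 1
        push_cast
        ring
      rw [h', h, Finset.sum_Icc_succ_top (Nat.le_add_left 1 n)]
      push_cast
      ring
    rw [eT2, eT]
    exact key_top s n hsn1 _
  -- now the sum shuffle
  rw [Finset.sum_range_succ'
    (fun k => genChoose (s+(n:ℂ)+1) k * (∑ j ∈ Finset.range k, 1/(s+(n:ℂ)+1-(j:ℂ))) * x ^ k) (n+1)]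
  simp only [Finset.range_zero, Finset.sum_empty, mul_zero, zero_mul, add_zero, pow_zero, mul_one]
  rw [Finset.sum_range_succ]
  have hsum : ∑ k ∈ Finset.range n,
      genChoose (s+(n:ℂ)+1) (k+1) * (∑ j ∈ Finset.range (k+1), 1/(s+(n:ℂ)+1-(j:ℂ))) * x ^ (k+1)
      = ∑ k ∈ Finset.range n,
        (genChoose (s+n) (k+1) * (∑ j ∈ Finset.range (k+1), 1/(s+(n:ℂ)-(j:ℂ)))
          + genChoose (s+n) k * (∑ j ∈ Finset.range k, 1/(s+(n:ℂ)-(j:ℂ)))) * x ^ (k+1) := by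
    apply Finset.sum_congr rfl
    intro k hk
    rw [h1 k hk]
  rw [hsum, h2]
  have e3 : ∑ k ∈ Finset.range (n+1),
      genChoose (s+(n:ℂ)) k * (∑ j ∈ Finset.range k, 1/(s+(n:ℂ)-(j:ℂ))) * x ^ k
      = ∑ k ∈ Finset.range n,
        genChoose (s+(n:ℂ)) (k+1) * (∑ j ∈ Finset.range (k+1), 1/(s+(n:ℂ)-(j:ℂ))) * x ^ (k+1) := by
    rw [Finset.sum_range_succ'
      (fun k => genChoose (s+(n:ℂ)) k * (∑ j ∈ Finset.range k, 1/(s+(n:ℂ)-(j:ℂ))) * x ^ k) n]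
    simp
  have e4 : x * ∑ k ∈ Finset.range (n+1),
      genChoose (s+(n:ℂ)) k * (∑ j ∈ Finset.range k, 1/(s+(n:ℂ)-(j:ℂ))) * x ^ k
      = (∑ k ∈ Finset.range n,
          genChoose (s+(n:ℂ)) k * (∑ j ∈ Finset.range k, 1/(s+(n:ℂ)-(j:ℂ))) * x ^ (k+1))
        + genChoose (s+(n:ℂ)) n * (∑ j ∈ Finset.range n, 1/(s+(n:ℂ)-(j:ℂ))) * x ^ (n+1) := by
    rw [Finset.mul_sum, Finset.sum_range_succ]
    congr 1
    · apply Finset.sum_congr rfl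
      intro k _
      ring
    · ring
  simp only [add_mul]
  rw [Finset.sum_add_distrib, e4, e3]
  ring

lemma main (n : ℕ) (hn : 1 ≤ n) (s x : ℂ) :
    (∀ j ∈ Finset.Icc 1 n, s + (j:ℂ) ≠ 0) →
    ∑ k ∈ Finset.range (n+1),
        genChoose (s + n) k * (∑ j ∈ Finset.range k, 1 / (s + n - j)) * x ^ k =
      ∑ k ∈ Finset.range n, genChoose (s + k) k / (k + 1) *
        (1 + s * ∑ j ∈ Finset.Icc 1 k, 1 / (s + j)) * x ^ (k + 1) * (1 + x) ^ (n - k - 1) := by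
  induction n, hn using Nat.le_induction with
  | base =>
    intro hs
    have h1 : s + 1 ≠ 0 := by simpa using hs 1 (by simp)
    simp [Finset.sum_range_succ, genChoose]
    field_simp
  | succ n hn ih =>
    intro hs
    have hs' : ∀ j ∈ Finset.Icc 1 n, s + (j:ℂ) ≠ 0 := by
      intro j hj
      apply hs j
      simp only [Finset.mem_Icc] at hj ⊢
      omega
    have hcast : s + (((n+1:ℕ)):ℂ) = s + (n:ℂ) + 1 := by push_cast; ring
    rw [hcast, LHS_step n s x hs, ih hs']
    rw [Finset.sum_range_succ]
    have hn0 : n + 1 - n - 1 = 0 := by omega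
    rw [hn0, pow_zero, mul_one]
    congr 1
    rw [Finset.mul_sum]
    apply Finset.sum_congr rfl
    intro k hk
    simp only [Finset.mem_range] at hk
    have h : n + 1 - k - 1 = (n - k - 1) + 1 := by omega
    rw [h, pow_succ]
    ring

theorem stmt_1 (n : ℕ) (hn : 0 < n) (s : ℂ)
    (hs : ∀ j ∈ Finset.Icc 1 n, s + (j : ℂ) ≠ 0) (x : ℂ) :
    ∑ k ∈ Finset.Icc 1 n, genChoose (s + n) k *
        (∑ j ∈ Finset.range k, 1 / (s + n - j)) * x ^ k =
      ∑ k ∈ Finset.range n, genChoose (s + k) k / (k + 1) *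
        (1 + s * ∑ j ∈ Finset.Icc 1 k, 1 / (s + j)) * x ^ (k + 1) * (1 + x) ^ (n - k - 1) := by
  have h := main n hn s x hs
  have hrange : Finset.range (n+1) = insert 0 (Finset.Icc 1 n) := by
    ext k
    simp only [Finset.mem_Icc, Finset.mem_range, Finset.mem_insert]
    omega
  rw [hrange, Finset.sum_insert (by simp)] at h
  simp only [Finset.range_zero, Finset.sum_empty, mul_zero, zero_mul, pow_zero, zero_add] at h
  exact h
end

section
/- Let n be a positive integer and let s be a complex number such that s + j ≠ 0 for j = 1, …, n. Then ∑_{k=1}^{n} ((-1)^{k-1}/k) · C(s+n, k) · [ (∑_{j=0}^{k-1} 1/(s+n-j))^2 − ∑_{j=0}^{k-1} 1/(s+n-j)^2 ] = 2 · ∑_{k=0}^{n-1} ( (-1)^k · C(s+k, k) / ((k+1)^2 · binom(n, k+1)) ) · ∑_{j=1}^{k} 1/(s+j) + s · ∑_{k=0}^{n-1} ( (-1)^k · C(s+k, k) / ((k+1)^2 · binom(n, k+1)) ) · [ (∑_{j=1}^{k} 1/(s+j))^2 − ∑_{j=1}^{k} 1/(s+j)^2 ], where binom(n, k+1) is the ordinary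 binomial coefficient. -/
open Finset Polynomial


-- telescoping term identity
lemma term_id (n m i : ℕ) (him : i ≤ m) (hmn : m < n) :
    (Nat.choose m i : ℂ) / (((i:ℂ)+1) * (Nat.choose n (i+1) : ℂ))
      = ((n:ℂ) - m)⁻¹ * ((Nat.choose m i : ℂ)/(Nat.choose n i : ℂ)
          - (Nat.choose m (i+1) : ℂ)/(Nat.choose n (i+1) : ℂ)) := by
  have hin : i ≤ n := him.trans hmn.le
  have hin' : i + 1 ≤ n := hmn.trans_le' him
  have ha : (Nat.choose n i : ℂ) ≠ 0 := by exact_mod_cast (Nat.choose_pos hin).ne'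
  have hb : (Nat.choose n (i+1) : ℂ) ≠ 0 := by exact_mod_cast (Nat.choose_pos hin').ne'
  have hi1 : ((i:ℂ)+1) ≠ 0 := Nat.cast_add_one_ne_zero i
  have hnm : ((n:ℂ) - m) ≠ 0 := by
    have : (m:ℂ) ≠ (n:ℂ) := by exact_mod_cast hmn.ne
    intro h; exact this (sub_eq_zero.mp h).symm
  have hb1 : (Nat.choose n (i+1) : ℂ) * ((i:ℂ)+1) = (Nat.choose n i : ℂ) * ((n:ℂ) - i) := by
    have h2 := congrArg (Nat.cast : ℕ → ℂ) (Nat.choose_succ_right_eq n i)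
    push_cast [Nat.cast_sub hin] at h2
    exact h2
  have hd1 : (Nat.choose m (i+1) : ℂ) * ((i:ℂ)+1) = (Nat.choose m i : ℂ) * ((m:ℂ) - i) := by
    have h2 := congrArg (Nat.cast : ℕ → ℂ) (Nat.choose_succ_right_eq m i)
    push_cast [Nat.cast_sub him] at h2
    exact h2
  rw [div_sub_div _ _ ha hb, inv_mul_eq_div, div_div,
    div_eq_div_iff (by exact mul_ne_zero hi1 hb) (by exact mul_ne_zero (mul_ne_zero ha hb) hnm)]
  linear_combination -(Nat.choose m i : ℂ) * (Nat.choose n (i+1) : ℂ) * hb1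
    + (Nat.choose n i : ℂ) * (Nat.choose n (i+1) : ℂ) * hd1

lemma delta (n m : ℕ) (hmn : m < n) :
    ∑ i ∈ range (m+1), (Nat.choose m i : ℂ) / (((i:ℂ)+1) * (Nat.choose n (i+1) : ℂ))
      = ((n:ℂ) - m)⁻¹ := by
  have h1 : ∀ i ∈ range (m+1), (Nat.choose m i : ℂ) / (((i:ℂ)+1) * (Nat.choose n (i+1) : ℂ))
      = ((n:ℂ) - m)⁻¹ * ((Nat.choose m i : ℂ)/(Nat.choose n i : ℂ)
          - (Nat.choose m (i+1) : ℂ)/(Nat.choose n (i+1) : ℂ)) := by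
    intro i hi; exact term_id n m i (Nat.lt_succ_iff.mp (mem_range.mp hi)) hmn
  rw [Finset.sum_congr rfl h1, ← Finset.mul_sum]
  have h2 : ∑ i ∈ range (m+1), ((Nat.choose m i : ℂ)/(Nat.choose n i : ℂ)
      - (Nat.choose m (i+1) : ℂ)/(Nat.choose n (i+1) : ℂ)) = 1 := by
    rw [Finset.sum_range_sub' (fun i => (Nat.choose m i : ℂ)/(Nat.choose n i : ℂ))]
    simp [Nat.choose_self, Nat.choose_succ_self]
  rw [h2, mul_one]

lemma altsum (N : ℕ) (hN : N ≠ 0) :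
    ∑ i ∈ range (N+1), (-1:ℂ)^i * (Nat.choose N i : ℂ) = 0 := by
  have h := Int.alternating_sum_range_choose_of_ne hN
  have h2 := congrArg (Int.cast : ℤ → ℂ) h
  push_cast at h2
  convert h2 using 1

lemma altH (N : ℕ) :
    ∑ k ∈ Icc 1 N, (-1:ℂ)^(k-1) * (Nat.choose N k : ℂ) / k = ∑ j ∈ Icc 1 N, 1/(j:ℂ) := by
  induction N with
  | zero => simp
  | succ N ih =>
    have key : ∀ M, ∑ k ∈ Icc 1 M, (-1:ℂ)^(k-1) * (Nat.choose M k : ℂ) / k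
        = ∑ i ∈ range M, (-1:ℂ)^i * (Nat.choose M (i+1) : ℂ) / ((i:ℂ)+1) := by
      intro M
      rw [← Finset.Ico_add_one_right_eq_Icc, Finset.sum_Ico_eq_sum_range]
      simp only [Nat.add_sub_cancel, Nat.succ_sub_one]
      refine Finset.sum_congr rfl fun i _ => ?_
      rw [add_comm 1 i]
      push_cast [Nat.add_sub_cancel]
      ring_nf
    rw [key]
    have hsplit : ∑ i ∈ range (N+1), (-1:ℂ)^i * (Nat.choose (N+1) (i+1) : ℂ) / ((i:ℂ)+1)
        = (∑ i ∈ range (N+1), (-1:ℂ)^i * (Nat.choose N i : ℂ) / ((i:ℂ)+1))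
          + ∑ i ∈ range (N+1), (-1:ℂ)^i * (Nat.choose N (i+1) : ℂ) / ((i:ℂ)+1) := by
      rw [← Finset.sum_add_distrib]
      refine Finset.sum_congr rfl fun i _ => ?_
      rw [Nat.choose_succ_succ]
      push_cast
      ring
    rw [hsplit]
    -- first piece: C(N,i)/(i+1) = C(N+1,i+1)/(N+1)
    have hp1 : ∑ i ∈ range (N+1), (-1:ℂ)^i * (Nat.choose N i : ℂ) / ((i:ℂ)+1)
        = 1/((N:ℂ)+1) := by
      have hterm : ∀ i ∈ range (N+1), (-1:ℂ)^i * (Nat.choose N i : ℂ) / ((i:ℂ)+1)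
          = (-1:ℂ)^i * (Nat.choose (N+1) (i+1) : ℂ) / ((N:ℂ)+1) := by
        intro i _
        have h := congrArg (Nat.cast : ℕ → ℂ) (Nat.add_one_mul_choose_eq N i)
        push_cast at h
        have hi : ((i:ℂ)+1) ≠ 0 := Nat.cast_add_one_ne_zero i
        have hN1 : ((N:ℂ)+1) ≠ 0 := Nat.cast_add_one_ne_zero N
        field_simp
        linear_combination h
      rw [Finset.sum_congr rfl hterm]
      have halt : ∑ i ∈ range (N+1), (-1:ℂ)^i * (Nat.choose (N+1) (i+1) : ℂ) = 1 := by
        have h0 := altsum (N+1) (Nat.succ_ne_zero N)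
        rw [Finset.sum_range_succ'] at h0
        simp only [pow_zero, Nat.choose_zero_right, Nat.cast_one, mul_one] at h0
        have : ∑ i ∈ range (N+1), (-1:ℂ)^(i+1) * (Nat.choose (N+1) (i+1) : ℂ) = -1 := by
          linear_combination h0
        calc ∑ i ∈ range (N+1), (-1:ℂ)^i * (Nat.choose (N+1) (i+1) : ℂ)
            = - ∑ i ∈ range (N+1), (-1:ℂ)^(i+1) * (Nat.choose (N+1) (i+1) : ℂ) := by
              rw [← Finset.sum_neg_distrib]
              refine Finset.sum_congr rfl fun i _ => by ring
          _ = 1 := by rw [this]; ring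
      rw [← Finset.sum_div, halt]
    rw [hp1]
    have htrunc : ∑ i ∈ range (N+1), (-1:ℂ)^i * (Nat.choose N (i+1) : ℂ) / ((i:ℂ)+1)
        = ∑ i ∈ range N, (-1:ℂ)^i * (Nat.choose N (i+1) : ℂ) / ((i:ℂ)+1) := by
      rw [Finset.sum_range_succ, Nat.choose_succ_self]
      simp
    rw [htrunc, ← key, ih]
    rw [Finset.sum_Icc_succ_top (by omega : 1 ≤ N+1)]
    push_cast
    ring

-- cast of falling factorial product
lemma prod_desc (a k : ℕ) (hk : k ≤ a) :
    ∏ j ∈ range k, ((a:ℂ) - j) = (Nat.choose a k : ℂ) * (Nat.factorial k : ℂ) := by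
  have h1 : ∏ j ∈ range k, ((a:ℂ) - j) = ((a.descFactorial k : ℕ) : ℂ) := by
    rw [Nat.descFactorial_eq_prod_range, Nat.cast_prod]
    refine Finset.prod_congr rfl fun j hj => ?_
    have : j ≤ a := le_trans (Nat.le_of_lt_succ (Nat.lt_succ_of_lt (mem_range.mp hj))) (by omega)
    rw [Nat.cast_sub this]
  rw [h1, Nat.descFactorial_eq_factorial_mul_choose]
  push_cast; ring

lemma prod_desc_zero (a k : ℕ) (hk : a < k) :
    ∏ j ∈ range k, ((a:ℂ) - j) = 0 :=
  Finset.prod_eq_zero (mem_range.mpr hk) (by simp)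

-- key evaluation lemma
lemma evalA (n a : ℕ) (han : a ≤ n) :
    ∑ k ∈ Icc 1 n, (-1:ℂ)^(k-1) / ((k:ℂ) * (Nat.factorial k : ℂ)) * ∏ j ∈ range k, ((a:ℂ) - j)
      = ∑ j ∈ Icc 1 a, 1/(j:ℂ) := by
  rw [← altH a]
  rw [← Finset.sum_subset (Finset.Icc_subset_Icc_right han)
      (fun k _ hk2 => ?_)]
  · refine Finset.sum_congr rfl fun k hk => ?_
    have hka : k ≤ a := (mem_Icc.mp hk).2
    rw [prod_desc a k hka]
    have hf : (Nat.factorial k : ℂ) ≠ 0 := by exact_mod_cast (Nat.factorial_pos k).ne'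
    have hk0 : (k:ℂ) ≠ 0 := by
      have := (mem_Icc.mp hk).1; exact_mod_cast Nat.pos_of_ne_zero (by omega) |>.ne'
    field_simp
  · -- k in Icc 1 n but not in Icc 1 a: a < k
    have h1 : a < k := by
      rcases mem_Icc.mp ‹k ∈ Icc 1 n› with ⟨hk1, hkn⟩
      by_contra h
      exact hk2 (mem_Icc.mpr ⟨hk1, by omega⟩)
    rw [prod_desc_zero a k h1, mul_zero]

lemma Fid (n : ℕ) : ∀ m, m ≤ n →
    ∑ k ∈ Icc 1 m, (Nat.choose m k : ℂ)/((k:ℂ) * (Nat.choose n k : ℂ))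
      = ∑ j ∈ Icc (n-m+1) n, 1/(j:ℂ) := by
  intro m
  induction m with
  | zero => intro _; simp
  | succ m ih =>
    intro hm1
    have hmn : m < n := hm1
    have key : ∀ M, ∑ k ∈ Icc 1 M, (Nat.choose M k : ℂ)/((k:ℂ) * (Nat.choose n k : ℂ))
        = ∑ i ∈ range M, (Nat.choose M (i+1) : ℂ)/(((i:ℂ)+1) * (Nat.choose n (i+1) : ℂ)) := by
      intro M
      rw [← Finset.Ico_add_one_right_eq_Icc, Finset.sum_Ico_eq_sum_range]
      simp only [Nat.add_sub_cancel, Nat.succ_sub_one]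
      refine Finset.sum_congr rfl fun i _ => ?_
      rw [add_comm 1 i]
      push_cast
      ring_nf
    rw [key]
    have hsplit : ∑ i ∈ range (m+1), (Nat.choose (m+1) (i+1) : ℂ)/(((i:ℂ)+1) * (Nat.choose n (i+1) : ℂ))
        = (∑ i ∈ range (m+1), (Nat.choose m i : ℂ)/(((i:ℂ)+1) * (Nat.choose n (i+1) : ℂ)))
          + ∑ i ∈ range (m+1), (Nat.choose m (i+1) : ℂ)/(((i:ℂ)+1) * (Nat.choose n (i+1) : ℂ)) := by
      rw [← Finset.sum_add_distrib]
      refine Finset.sum_congr rfl fun i _ => ?_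
      rw [Nat.choose_succ_succ]
      push_cast
      rw [add_div]
    rw [hsplit, delta n m hmn]
    have htrunc : ∑ i ∈ range (m+1), (Nat.choose m (i+1) : ℂ)/(((i:ℂ)+1) * (Nat.choose n (i+1) : ℂ))
        = ∑ i ∈ range m, (Nat.choose m (i+1) : ℂ)/(((i:ℂ)+1) * (Nat.choose n (i+1) : ℂ)) := by
      rw [Finset.sum_range_succ, Nat.choose_succ_self]
      simp
    rw [htrunc, ← key m, ih hmn.le]
    -- now: (n-m)⁻¹ + ∑_{Icc (n-m+1) n} = ∑_{Icc (n-(m+1)+1) n}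
    have h1 : n - (m+1) + 1 = n - m := by omega
    rw [h1]
    have h2 : n - m ≤ n := Nat.sub_le n m
    have h3 : 1 ≤ n - m := by omega
    rw [Finset.Icc_eq_cons_Ioc h2, Finset.sum_cons, ← Finset.Icc_add_one_left_eq_Ioc]
    have h4 : ((n - m : ℕ) : ℂ) = (n:ℂ) - m := by push_cast [Nat.cast_sub hmn.le]; ring
    rw [h4, one_div]

lemma Hsplit (n a : ℕ) (h : a ≤ n) :
    ∑ j ∈ Icc 1 a, 1/(j:ℂ) + ∑ j ∈ Icc (a+1) n, 1/(j:ℂ) = ∑ j ∈ Icc 1 n, 1/(j:ℂ) := by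
  rw [show (1:ℕ) = 0 + 1 by rfl, Finset.Icc_add_one_left_eq_Ioc, Finset.Icc_add_one_left_eq_Ioc, zero_add, Finset.Icc_add_one_left_eq_Ioc,
    ← Finset.sum_union (by
      simp only [Finset.disjoint_left, Finset.mem_Ioc]
      intro x hx hx2; omega),
    Finset.Ioc_union_Ioc_eq_Ioc (Nat.zero_le a) h]

lemma evalB (n m : ℕ) (hmn : m < n) :
    ∑ k ∈ Icc 1 n, (-1:ℂ)^(k-1) / ((k:ℂ) * (Nat.factorial k : ℂ) * (Nat.choose n k : ℂ))
        * ∏ j ∈ range k, ((j:ℂ) - m)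
      = - ∑ j ∈ Icc (n-m+1) n, 1/(j:ℂ) := by
  rw [← Fid n m hmn.le]
  rw [← Finset.sum_subset (Finset.Icc_subset_Icc_right hmn.le) (fun k hk hk2 => ?_)]
  · rw [← Finset.sum_neg_distrib]
    refine Finset.sum_congr rfl fun k hk => ?_
    rcases mem_Icc.mp hk with ⟨hk1, hkm⟩
    have hprod : ∏ j ∈ range k, ((j:ℂ) - m) = (-1:ℂ)^k * ((Nat.choose m k : ℂ) * (Nat.factorial k : ℂ)) := by
      rw [← prod_desc m k hkm]
      rw [show (-1:ℂ)^k = ∏ _j ∈ range k, (-1:ℂ) by simp, ← Finset.prod_mul_distrib]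
      refine Finset.prod_congr rfl fun j _ => by ring
    rw [hprod]
    have hf : (Nat.factorial k : ℂ) ≠ 0 := by exact_mod_cast (Nat.factorial_pos k).ne'
    have hk0 : (k:ℂ) ≠ 0 := by exact_mod_cast (by omega : k ≠ 0)
    have hc : (Nat.choose n k : ℂ) ≠ 0 := by
      exact_mod_cast (Nat.choose_pos (by omega : k ≤ n)).ne'
    have hsgn : (-1:ℂ)^(k-1) * (-1:ℂ)^k = -1 := by
      have : k - 1 + k = 2*(k-1)+1 := by omega
      rw [← pow_add, this, pow_succ, pow_mul]
      norm_num
    field_simp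
    linear_combination (Nat.choose m k : ℂ) * hsgn
  · -- k > m: product vanishes
    have h1 : m < k := by
      rcases mem_Icc.mp hk with ⟨hk1, hkn⟩
      by_contra h
      exact hk2 (mem_Icc.mpr ⟨hk1, by omega⟩)
    rw [Finset.prod_eq_zero (mem_range.mpr h1) (by simp), mul_zero]

noncomputable def LPoly (n : ℕ) : Polynomial ℂ :=
  ∑ k ∈ Icc 1 n, Polynomial.C ((-1:ℂ)^(k-1) / ((k:ℂ) * (Nat.factorial k : ℂ)))
    * ∏ j ∈ range k, (Polynomial.X + Polynomial.C ((n:ℂ) - j))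

noncomputable def RPoly (n : ℕ) : Polynomial ℂ :=
  Polynomial.C (∑ j ∈ Icc 1 n, 1/(j:ℂ)) +
  ∑ k ∈ Icc 1 n, Polynomial.C ((-1:ℂ)^(k-1) / ((k:ℂ) * (Nat.factorial k : ℂ) * (Nat.choose n k : ℂ)))
    * ∏ j ∈ range k, (Polynomial.X + Polynomial.C ((j:ℂ)))

lemma prodMonic (c : ℕ → ℂ) (k : ℕ) :
    (∏ j ∈ range k, (Polynomial.X + Polynomial.C (c j))).Monic :=
  monic_prod_of_monic _ _ fun j _ => monic_X_add_C (c j)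

lemma prodDeg (c : ℕ → ℂ) (k : ℕ) :
    (∏ j ∈ range k, (Polynomial.X + Polynomial.C (c j))).natDegree = k := by
  rw [natDegree_prod_of_monic _ _ fun j _ => monic_X_add_C (c j)]
  simp [natDegree_X_add_C]

lemma polyId (n : ℕ) (hn : 0 < n) : LPoly n = RPoly n := by
  have hcoeff : ∀ (c : ℕ → ℂ) (α : ℕ → ℂ),
      (∑ k ∈ Icc 1 n, Polynomial.C (α k) * ∏ j ∈ range k, (Polynomial.X + Polynomial.C (c j))).coeff n
        = α n := by
    intro c α
    rw [finset_sum_coeff]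
    rw [Finset.sum_eq_single n]
    · have h1 : (∏ j ∈ range n, (Polynomial.X + Polynomial.C (c j))).coeff n = 1 := by
        have h2 := (prodMonic c n).coeff_natDegree
        rwa [prodDeg] at h2
      rw [coeff_C_mul, h1, mul_one]
    · intro k hk hkn
      have hklt : k < n := lt_of_le_of_ne (mem_Icc.mp hk).2 hkn
      rw [coeff_C_mul, coeff_eq_zero_of_natDegree_lt (by rw [prodDeg]; exact hklt), mul_zero]
    · intro h; exact absurd (mem_Icc.mpr ⟨hn, le_refl n⟩) h
  have hdegsum : ∀ (c : ℕ → ℂ) (α : ℕ → ℂ),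
      (∑ k ∈ Icc 1 n, Polynomial.C (α k) * ∏ j ∈ range k, (Polynomial.X + Polynomial.C (c j))).natDegree ≤ n := by
    intro c α
    refine natDegree_sum_le_of_forall_le _ _ fun k hk => ?_
    refine le_trans (natDegree_C_mul_le _ _) ?_
    rw [prodDeg]; exact (mem_Icc.mp hk).2
  set D := LPoly n - RPoly n with hD
  suffices hzero : D = 0 by
    have := sub_eq_zero.mp hzero; exact this
  have hdeg : D.natDegree ≤ n := by
    refine le_trans (natDegree_sub_le _ _) (max_le (hdegsum _ _) ?_)
    unfold RPoly
    refine le_trans (natDegree_add_le _ _) (max_le ?_ (hdegsum _ _))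
    exact le_trans (natDegree_C _).le (Nat.zero_le n)
  have hcn : D.coeff n = 0 := by
    rw [hD, coeff_sub]
    unfold LPoly RPoly
    rw [coeff_add, hcoeff, hcoeff, coeff_C, if_neg hn.ne']
    rw [Nat.choose_self]
    push_cast
    ring
  have hlt : D ≠ 0 → D.natDegree < n := by
    intro h0
    rcases lt_or_eq_of_le hdeg with h | h
    · exact h
    · exfalso
      apply h0
      have : D.leadingCoeff = 0 := by rw [leadingCoeff, h]; exact hcn
      exact leadingCoeff_eq_zero.mp this
  by_cases h0 : D = 0
  · exact h0
  · refine Polynomial.eq_zero_of_natDegree_lt_card_of_eval_eq_zero D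
      (f := fun m : Fin n => -((m:ℕ):ℂ)) ?_ ?_ ?_
    · intro a b hab
      simp only [neg_inj, Nat.cast_inj] at hab
      exact Fin.ext (by exact_mod_cast hab)
    · intro m
      have hmn : (m : ℕ) < n := m.isLt
      unfold D
      rw [eval_sub]
      unfold LPoly RPoly
      rw [eval_add, eval_C, eval_finset_sum, eval_finset_sum]
      have hL : ∀ k ∈ Icc 1 n,
          eval (-((m:ℕ):ℂ)) (Polynomial.C ((-1:ℂ)^(k-1) / ((k:ℂ) * (Nat.factorial k : ℂ)))
            * ∏ j ∈ range k, (Polynomial.X + Polynomial.C ((n:ℂ) - j)))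
          = (-1:ℂ)^(k-1) / ((k:ℂ) * (Nat.factorial k : ℂ)) * ∏ j ∈ range k, (((n - m : ℕ):ℂ) - j) := by
        intro k _
        rw [eval_mul, eval_C, eval_prod]
        congr 1
        refine Finset.prod_congr rfl fun j _ => ?_
        rw [eval_add, eval_X, eval_C, Nat.cast_sub hmn.le]
        ring
      have hR : ∀ k ∈ Icc 1 n,
          eval (-((m:ℕ):ℂ)) (Polynomial.C ((-1:ℂ)^(k-1) / ((k:ℂ) * (Nat.factorial k : ℂ) * (Nat.choose n k : ℂ)))
            * ∏ j ∈ range k, (Polynomial.X + Polynomial.C ((j:ℂ))))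
          = (-1:ℂ)^(k-1) / ((k:ℂ) * (Nat.factorial k : ℂ) * (Nat.choose n k : ℂ)) * ∏ j ∈ range k, ((j:ℂ) - m) := by
        intro k _
        rw [eval_mul, eval_C, eval_prod]
        congr 1
        refine Finset.prod_congr rfl fun j _ => ?_
        rw [eval_add, eval_X, eval_C]
        ring
      rw [Finset.sum_congr rfl hL, Finset.sum_congr rfl hR, evalA n (n - m) (Nat.sub_le n m),
        evalB n m hmn]
      have hsp := Hsplit n (n - m) (Nat.sub_le n m)
      have harr : n - m + 1 = (n - m) + 1 := rfl
      rw [sub_eq_zero]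
      linear_combination hsp
    · simpa using hlt h0

lemma c012 {ι : Type*} [DecidableEq ι] (t : Finset ι) (a : ι → ℂ) (h : ∀ i ∈ t, a i ≠ 0) :
    (∏ i ∈ t, (Polynomial.X + Polynomial.C (a i))).coeff 0 = ∏ i ∈ t, a i ∧
    (∏ i ∈ t, (Polynomial.X + Polynomial.C (a i))).coeff 1
      = (∏ i ∈ t, a i) * (∑ i ∈ t, (a i)⁻¹) ∧
    2 * (∏ i ∈ t, (Polynomial.X + Polynomial.C (a i))).coeff 2
      = (∏ i ∈ t, a i) * ((∑ i ∈ t, (a i)⁻¹)^2 - ∑ i ∈ t, ((a i)^2)⁻¹) := by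
  induction t using Finset.induction_on with
  | empty => simp [coeff_one]
  | insert _ _ hnotmem =>
    rename_i b t ih
    have hb : a b ≠ 0 := h b (mem_insert_self b t)
    have ht : ∀ i ∈ t, a i ≠ 0 := fun i hi => h i (mem_insert_of_mem hi)
    obtain ⟨h0, h1, h2⟩ := ih ht
    rw [Finset.prod_insert hnotmem, Finset.prod_insert hnotmem, Finset.sum_insert hnotmem,
      Finset.sum_insert hnotmem]
    set P := ∏ i ∈ t, (Polynomial.X + Polynomial.C (a i)) with hP
    have e0 : ((Polynomial.X + Polynomial.C (a b)) * P).coeff 0 = a b * P.coeff 0 := by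
      rw [add_mul, coeff_add, coeff_C_mul, mul_coeff_zero, coeff_X_zero, zero_mul, zero_add]
    have e1 : ((Polynomial.X + Polynomial.C (a b)) * P).coeff 1 = P.coeff 0 + a b * P.coeff 1 := by
      rw [add_mul, coeff_add, coeff_C_mul, coeff_X_mul]
    have e2 : ((Polynomial.X + Polynomial.C (a b)) * P).coeff 2 = P.coeff 1 + a b * P.coeff 2 := by
      rw [add_mul, coeff_add, coeff_C_mul, show (2:ℕ) = 1 + 1 from rfl, coeff_X_mul]
    refine ⟨by rw [e0, h0], ?_, ?_⟩
    · rw [e1, h0, h1]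
      field_simp
    · rw [mul_comm (2:ℂ)] at h2 ⊢
      rw [e2]
      have hbb : a b * (a b)⁻¹ = 1 := mul_inv_cancel₀ hb
      linear_combination a b * h2 + 2 * h1
        - 2 * ((∏ x ∈ t, a x) * (∑ x ∈ t, (a x)⁻¹)) * hbb

lemma comp_sum (t : Finset ℕ) (f : ℕ → Polynomial ℂ) (q : Polynomial ℂ) :
    (∑ k ∈ t, f k).comp q = ∑ k ∈ t, (f k).comp q := by
  simp only [Polynomial.comp, Polynomial.eval₂_finset_sum]

theorem stmt_7 (n : ℕ) (hn : 0 < n) (s : ℂ)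
    (hs : ∀ j ∈ Finset.Icc 1 n, s + (j : ℂ) ≠ 0) :
    ∑ k ∈ Finset.Icc 1 n, (-1 : ℂ) ^ (k - 1) / k * genChoose (s + n) k *
        ((∑ j ∈ Finset.range k, 1 / (s + n - j)) ^ 2 -
          ∑ j ∈ Finset.range k, 1 / (s + n - j) ^ 2) =
      2 * (∑ k ∈ Finset.range n, (-1 : ℂ) ^ k * genChoose (s + k) k /
          (((k : ℂ) + 1) ^ 2 * (Nat.choose n (k + 1) : ℂ)) *
          ∑ j ∈ Finset.Icc 1 k, 1 / (s + j)) +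
        s * ∑ k ∈ Finset.range n, (-1 : ℂ) ^ k * genChoose (s + k) k /
          (((k : ℂ) + 1) ^ 2 * (Nat.choose n (k + 1) : ℂ)) *
          ((∑ j ∈ Finset.Icc 1 k, 1 / (s + j)) ^ 2 -
            ∑ j ∈ Finset.Icc 1 k, 1 / (s + j) ^ 2) := by
  set q : Polynomial ℂ := Polynomial.X + Polynomial.C s with hqdef
  -- Left side
  have EqL : 2 * ((LPoly n).comp q).coeff 2
      = ∑ k ∈ Finset.Icc 1 n, (-1 : ℂ) ^ (k - 1) / k * genChoose (s + n) k *
        ((∑ j ∈ Finset.range k, 1 / (s + n - j)) ^ 2 -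
          ∑ j ∈ Finset.range k, 1 / (s + n - j) ^ 2) := by
    unfold LPoly
    rw [comp_sum, finset_sum_coeff, Finset.mul_sum]
    refine Finset.sum_congr rfl fun k hk => ?_
    rcases mem_Icc.mp hk with ⟨hk1, hkn⟩
    have hcompprod : (Polynomial.C ((-1:ℂ)^(k-1) / ((k:ℂ) * (Nat.factorial k : ℂ)))
        * ∏ j ∈ range k, (Polynomial.X + Polynomial.C ((n:ℂ) - j))).comp q
        = Polynomial.C ((-1:ℂ)^(k-1) / ((k:ℂ) * (Nat.factorial k : ℂ)))
          * ∏ j ∈ range k, (Polynomial.X + Polynomial.C (s + (n:ℂ) - j)) := by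
      rw [mul_comp, C_comp, Polynomial.prod_comp]
      congr 1
      refine Finset.prod_congr rfl fun j _ => ?_
      rw [add_comp, X_comp, C_comp, hqdef, add_assoc, ← Polynomial.C_add]
      congr 2
      ring
    rw [hcompprod, coeff_C_mul]
    have hnz : ∀ j ∈ range k, s + (n:ℂ) - (j:ℂ) ≠ 0 := by
      intro j hj
      have hjk : j < k := mem_range.mp hj
      have := hs (n - j) (mem_Icc.mpr ⟨by omega, Nat.sub_le n j⟩)
      have hcast : ((n - j : ℕ) : ℂ) = (n:ℂ) - j := Nat.cast_sub (by omega)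
      rw [hcast] at this
      intro hzero
      exact this (by linear_combination hzero)
    have hc := (c012 (range k) (fun j => s + (n:ℂ) - (j:ℂ)) hnz).2.2
    try simp only at hc
    rw [mul_left_comm, hc]
    unfold genChoose
    have hf : (Nat.factorial k : ℂ) ≠ 0 := by exact_mod_cast (Nat.factorial_pos k).ne'
    have hk0 : (k:ℂ) ≠ 0 := by exact_mod_cast (by omega : k ≠ 0)
    simp only [one_div]
    push_cast
    field_simp
  -- Right side
  have EqR : 2 * ((RPoly n).comp q).coeff 2
      = 2 * (∑ k ∈ Finset.range n, (-1 : ℂ) ^ k * genChoose (s + k) k /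
          (((k : ℂ) + 1) ^ 2 * (Nat.choose n (k + 1) : ℂ)) *
          ∑ j ∈ Finset.Icc 1 k, 1 / (s + j)) +
        s * ∑ k ∈ Finset.range n, (-1 : ℂ) ^ k * genChoose (s + k) k /
          (((k : ℂ) + 1) ^ 2 * (Nat.choose n (k + 1) : ℂ)) *
          ((∑ j ∈ Finset.Icc 1 k, 1 / (s + j)) ^ 2 -
            ∑ j ∈ Finset.Icc 1 k, 1 / (s + j) ^ 2) := by
    unfold RPoly
    rw [add_comp, C_comp, comp_sum, coeff_add, coeff_C, if_neg (by norm_num), zero_add,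
      finset_sum_coeff, Finset.mul_sum]
    rw [← Finset.Ico_add_one_right_eq_Icc, Finset.sum_Ico_eq_sum_range]
    simp only [Nat.add_sub_cancel, Nat.succ_sub_one]
    conv_rhs => rw [Finset.mul_sum, Finset.mul_sum]
    rw [← Finset.sum_add_distrib]
    refine Finset.sum_congr rfl fun r hr => ?_
    have hrn : r < n := mem_range.mp hr
    have hcompprod : ((Polynomial.C ((-1:ℂ)^((1+r)-1) / (((1+r : ℕ):ℂ) * (Nat.factorial (1+r) : ℂ) * (Nat.choose n (1+r) : ℂ)))
        * ∏ j ∈ range (1+r), (Polynomial.X + Polynomial.C ((j:ℂ)))).comp q)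
        = Polynomial.C ((-1:ℂ)^r / (((1+r : ℕ):ℂ) * (Nat.factorial (1+r) : ℂ) * (Nat.choose n (1+r) : ℂ)))
          * ((∏ i ∈ range r, (Polynomial.X + Polynomial.C (s + ((i:ℂ)+1)))) * (Polynomial.X + Polynomial.C s)) := by
      rw [show (1+r)-1 = r from by omega, mul_comp, C_comp, Polynomial.prod_comp]
      congr 1
      rw [add_comm 1 r, Finset.prod_range_succ']
      congr 1
      · refine Finset.prod_congr rfl fun i _ => ?_
        rw [add_comp, X_comp, C_comp, hqdef, add_assoc, ← Polynomial.C_add]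
        congr 2
        push_cast
        ring
      · rw [add_comp, X_comp, C_comp, hqdef]
        norm_num
    rw [hcompprod, coeff_C_mul]
    set Q : Polynomial ℂ := ∏ i ∈ range r, (Polynomial.X + Polynomial.C (s + ((i:ℂ)+1))) with hQ
    have hmul2 : (Q * (Polynomial.X + Polynomial.C s)).coeff 2 = Q.coeff 1 + s * Q.coeff 2 := by
      rw [mul_comm Q _, add_mul, coeff_add, show (2:ℕ) = 1 + 1 from rfl, coeff_X_mul, coeff_C_mul]
    rw [hmul2]
    have hnz : ∀ i ∈ range r, s + ((i:ℂ)+1) ≠ 0 := by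
      intro i hi
      have hir : i < r := mem_range.mp hi
      have := hs (i+1) (mem_Icc.mpr ⟨by omega, by omega⟩)
      intro hzero
      exact this (by push_cast; linear_combination hzero)
    obtain ⟨-, hc1, hc2⟩ := c012 (range r) (fun i => s + ((i:ℂ)+1)) hnz
    try simp only at hc1 hc2
    have hc2' : Q.coeff 2 = (∏ i ∈ range r, (s + ((i:ℂ)+1)))
        * ((∑ i ∈ range r, (s + ((i:ℂ)+1))⁻¹)^2 - ∑ i ∈ range r, ((s + ((i:ℂ)+1))^2)⁻¹) / 2 := by
      rw [hQ]; linear_combination hc2 / 2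
    rw [← hQ] at hc1
    rw [hc1, hc2']
    -- rewrite theorem-side sums and genChoose
    have hS1 : ∑ j ∈ Finset.Icc 1 r, 1 / (s + (j:ℂ)) = ∑ i ∈ range r, (s + ((i:ℂ)+1))⁻¹ := by
      rw [← Finset.Ico_add_one_right_eq_Icc, Finset.sum_Ico_eq_sum_range]
      simp only [Nat.add_sub_cancel, Nat.succ_sub_one]
      refine Finset.sum_congr rfl fun i _ => ?_
      rw [one_div]
      congr 1
      push_cast
      ring
    have hS2 : ∑ j ∈ Finset.Icc 1 r, 1 / (s + (j:ℂ))^2 = ∑ i ∈ range r, ((s + ((i:ℂ)+1))^2)⁻¹ := by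
      rw [← Finset.Ico_add_one_right_eq_Icc, Finset.sum_Ico_eq_sum_range]
      simp only [Nat.add_sub_cancel, Nat.succ_sub_one]
      refine Finset.sum_congr rfl fun i _ => ?_
      rw [one_div]
      congr 2
      push_cast
      ring
    have hgen : genChoose (s + (r:ℂ)) r = (∏ i ∈ range r, (s + ((i:ℂ)+1))) / (Nat.factorial r : ℂ) := by
      unfold genChoose
      congr 1
      conv_rhs => rw [← Finset.prod_range_reflect]
      refine Finset.prod_congr rfl fun j hj => ?_
      have hjr : j < r := mem_range.mp hj
      have hcast : ((r - 1 - j : ℕ) : ℂ) = (r:ℂ) - 1 - (j:ℂ) := by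
        rw [Nat.cast_sub (by omega : j ≤ r - 1), Nat.cast_sub (by omega : 1 ≤ r)]
        norm_num
      rw [hcast]
      ring
    rw [hS1, hS2, hgen]
    have hfac : (Nat.factorial r : ℂ) ≠ 0 := by exact_mod_cast (Nat.factorial_pos r).ne'
    have hr1 : ((r:ℂ)+1) ≠ 0 := Nat.cast_add_one_ne_zero r
    have hch : (Nat.choose n (1+r) : ℂ) ≠ 0 := by
      exact_mod_cast (Nat.choose_pos (by omega : 1+r ≤ n)).ne'
    have hfactsucc : (Nat.factorial (1+r) : ℂ) = ((1+r : ℕ):ℂ) * (Nat.factorial r : ℂ) := by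
      rw [add_comm 1 r]
      exact_mod_cast congrArg (Nat.cast : ℕ → ℂ) (Nat.factorial_succ r)
    rw [hfactsucc]
    have hch' : (Nat.choose n (r+1) : ℂ) = (Nat.choose n (1+r) : ℂ) := by rw [add_comm 1 r]
    rw [hch']
    have hr1' : (1:ℂ) + (r:ℂ) ≠ 0 := by rw [add_comm]; exact hr1
    push_cast
    field_simp
    ring
  rw [← EqL, ← EqR, polyId n hn]
end
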